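/- Let R ⊆ A be integral domains with a retraction Φ : A → R whose kernel is a finitely generated ideal. Suppose p ∈ R is prime in both R and A, and A[1/p] = R[1/p]^{[1]}. Then A = R[x] = R^{[1]} for some x ∈ Ker Φ. -/

import Mathlib

set_option linter.unusedSectionVars false
set_option linter.unusedVariables false
set_option maxHeartbeats 1000000
open Polynomial

section StmtEight
variable {A : Type*} [CommRing A] [IsDomain A] {R : Subring A}

private lemma coeff0_dvd' (Φ : A →ₐ[R] R) (p : R) (x : A) (hx : Φ x = 0)
    (f : R[X]) (h : (p : A) ∣ aeval x f) : ∃ s : R, f.coeff 0 = p * s := by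
  obtain ⟨c, hc⟩ := h
  refine ⟨Φ c, ?_⟩
  have h1 : Φ (aeval x f) = aeval (Φ x) f := (aeval_algHom_apply Φ x f).symm
  rw [hx] at h1
  have h2 : aeval (0 : R) f = f.coeff 0 := by
    simp [aeval_def, eval₂_at_zero]
  have h3 : Φ ((p : A) * c) = p * Φ c := by
    have hh : ((p : A)) = algebraMap R A p := rfl
    rw [hh, map_mul, AlgHom.commutes]
    simp
  rw [hc, h3, h2] at h1
  exact h1.symm

private lemma divX_dvd' (Φ : A →ₐ[R] R) (p : R) (hpA : Prime (p : A)) (x : A) (hx : Φ x = 0)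
    (hpx : ¬ ((p : A) ∣ x)) (f : R[X]) (h : (p : A) ∣ aeval x f) :
    (p : A) ∣ aeval x f.divX := by
  obtain ⟨c, hc⟩ := h
  obtain ⟨s, hs⟩ := coeff0_dvd' Φ p x hx f ⟨c, hc⟩
  have key : x * aeval x f.divX = (p : A) * (c - (s : A)) := by
    have h4 : x * aeval x f.divX + ((f.coeff 0 : R) : A) = aeval x f := by
      conv_rhs => rw [← X_mul_divX_add f]
      rw [map_add, map_mul, aeval_X, aeval_C]
      rfl
    have h5 : ((f.coeff 0 : R) : A) = (p : A) * (s : A) := by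
      rw [hs]; push_cast; ring
    rw [h5, hc] at h4
    linear_combination h4
  have : (p : A) ∣ x * aeval x f.divX := ⟨c - (s : A), key⟩
  exact (hpA.dvd_mul.mp this).resolve_left hpx

private lemma all_coeff_dvd' (Φ : A →ₐ[R] R) (p : R) (hpA : Prime (p : A)) (x : A) (hx : Φ x = 0)
    (hpx : ¬ ((p : A) ∣ x)) :
    ∀ (n : ℕ) (f : R[X]), f.natDegree ≤ n → (p : A) ∣ aeval x f → ∀ j, p ∣ f.coeff j := by
  intro n
  induction n with
  | zero =>
    intro f hf h j
    match j with
    | 0 => obtain ⟨s, hs⟩ := coeff0_dvd' Φ p x hx f h; exact ⟨s, hs⟩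
    | j + 1 =>
      rw [f.coeff_eq_zero_of_natDegree_lt (by omega)]
      exact dvd_zero p
  | succ n ih =>
    intro f hf h j
    match j with
    | 0 => obtain ⟨s, hs⟩ := coeff0_dvd' Φ p x hx f h; exact ⟨s, hs⟩
    | j + 1 =>
      rw [← coeff_divX]
      exact ih f.divX (by
        have := f.natDegree_divX_eq_natDegree_tsub_one
        omega) (divX_dvd' Φ p hpA x hx hpx f h) j

private lemma adjoin_of_p_mul' (Φ : A →ₐ[R] R) (p : R) (hpA : Prime (p : A)) (x : A)
    (hx : Φ x = 0) (hpx : ¬ ((p : A) ∣ x))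
    (a : A) (h : (p : A) * a ∈ Algebra.adjoin R {x}) : a ∈ Algebra.adjoin R {x} := by
  rw [Algebra.adjoin_singleton_eq_range_aeval] at h ⊢
  obtain ⟨f, hf⟩ := h
  simp only [AlgHom.toRingHom_eq_coe, RingHom.coe_coe] at hf
  have hdvd : ∀ j, p ∣ f.coeff j :=
    all_coeff_dvd' Φ p hpA x hx hpx f.natDegree f le_rfl ⟨a, hf⟩
  obtain ⟨g, hg⟩ := (C_dvd_iff_dvd_coeff p f).mpr hdvd
  refine ⟨g, ?_⟩
  simp only [AlgHom.toRingHom_eq_coe, RingHom.coe_coe]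
  have h2 : (p : A) * aeval x g = (p : A) * a := by
    rw [← hf, hg, map_mul, aeval_C]
    rfl
  exact (mul_left_cancel₀ hpA.ne_zero h2)

private lemma descend' (Φ : A →ₐ[R] R) (p : R) (hpA : Prime (p : A)) :
    ∀ (n : ℕ) (y : A), Φ y = 0 → y ≠ 0 → (∀ i : A, Φ i = 0 → y ∣ (p : A) ^ n * i) →
    ∃ (x : A) (k : ℕ), Φ x = 0 ∧ x ≠ 0 ∧ (∀ i : A, Φ i = 0 → x ∣ i) ∧ y = (p : A) ^ k * x := by
  intro n
  induction n with
  | zero =>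
    intro y hy hy0 hdvd
    exact ⟨y, 0, hy, hy0, fun i hi => by simpa using hdvd i hi, by simp⟩
  | succ n ih =>
    intro y hy hy0 hdvd
    by_cases hd : (p : A) ∣ y
    · obtain ⟨y₁, hy₁⟩ := hd
      have hy₁0 : y₁ ≠ 0 := by rintro rfl; simp at hy₁; exact hy0 (by simp [hy₁])
      have hΦy₁ : Φ y₁ = 0 := by
        have h0 : (p : R) * Φ y₁ = 0 := by
          have h1 : Φ y = Φ ((p : A) * y₁) := by rw [hy₁]
          rw [hy] at h1
          rw [show ((p:A)) = algebraMap R A p from rfl, map_mul, AlgHom.commutes] at h1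
          simpa using h1.symm
        have hp0 : (p : R) ≠ 0 := fun h => hpA.ne_zero (by rw [h]; simp)
        exact (mul_eq_zero.mp h0).resolve_left hp0
      obtain ⟨x, k, h1, h2, h3, h4⟩ := ih y₁ hΦy₁ hy₁0 (by
        intro i hi
        obtain ⟨a, ha⟩ := hdvd i hi
        refine ⟨a, mul_left_cancel₀ hpA.ne_zero ?_⟩
        calc (p : A) * ((p : A) ^ n * i) = (p : A) ^ (n + 1) * i := by ring
          _ = y * a := ha
          _ = (p : A) * (y₁ * a) := by rw [hy₁]; ring)
      exact ⟨x, k + 1, h1, h2, h3, by rw [hy₁, h4]; ring⟩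
    · refine ih y hy hy0 ?_
      intro i hi
      obtain ⟨a, ha⟩ := hdvd i hi
      have hpa : (p : A) ∣ y * a := ⟨(p : A) ^ n * i, by rw [← ha]; ring⟩
      obtain ⟨a', ha'⟩ := (hpA.dvd_mul.mp hpa).resolve_left hd
      refine ⟨a', mul_left_cancel₀ hpA.ne_zero ?_⟩
      calc (p : A) * ((p : A) ^ n * i) = (p : A) ^ (n + 1) * i := by ring
        _ = y * ((p : A) * a') := by rw [ha, ha']
        _ = (p : A) * (y * a') := by ring

end StmtEight


/-- Let `R ⊆ A` be integral domains with a retraction `Φ : A → R`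
whose kernel is a finitely generated ideal. Suppose `p ∈ R` is prime in both `R`
and `A`, and `A[1/p] = R[1/p]^{[1]}` (encoded: there is `x₀` transcendental over
`R` with `pⁿ a ∈ R[x₀]` for all `a ∈ A` and some `n`). Then `A = R[x] = R^{[1]}`
for some `x ∈ Ker Φ`. -/
theorem stmt8 {A : Type*} [CommRing A] [IsDomain A] (R : Subring A)
    (Φ : A →+* R) (hΦ : ∀ r : R, Φ (r : A) = r)
    (hfg : (RingHom.ker Φ).FG)
    (p : R) (hpR : Prime p) (hpA : Prime (p : A))
    (hloc : ∃ x₀ : A, Transcendental R x₀ ∧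
      ∀ a : A, ∃ n : ℕ, (p : A) ^ n * a ∈ Algebra.adjoin R {x₀}) :
    ∃ x : A, Φ x = 0 ∧ Transcendental R x ∧ Algebra.adjoin R {x} = ⊤ := by
  classical
  obtain ⟨x₀, hx₀t, hx₀loc⟩ := hloc
  set Φ' : A →ₐ[R] R := { Φ with commutes' := fun r => hΦ r } with hΦ'def
  have hΦ'eq : ∀ a : A, Φ' a = Φ a := fun _ => rfl
  set c : R := Φ x₀ with hc
  set y : A := x₀ - (c : A) with hy
  have hΦy : Φ' y = 0 := by
    rw [hy, map_sub, show ((c:A)) = algebraMap R A c from rfl, AlgHom.commutes, hΦ'eq, hc]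
    simp
  have hy0 : y ≠ 0 := by
    intro h0
    exact hx₀t ⟨X - C c, X_sub_C_ne_zero c, by
      rw [map_sub, aeval_X, aeval_C]
      exact h0⟩
  -- x₀ ∈ adjoin R {y}
  have hadj : Algebra.adjoin R {x₀} ≤ Algebra.adjoin R {y} := by
    apply Algebra.adjoin_le
    intro z hz
    rw [Set.mem_singleton_iff] at hz
    rw [hz]
    have hxy : x₀ = y + algebraMap R A c := by
      rw [hy, show algebraMap R A c = (c : A) from rfl]; ring
    rw [hxy]
    exact add_mem (Algebra.self_mem_adjoin_singleton R y) (Subalgebra.algebraMap_mem _ c)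
  -- every element of the kernel is divisible by y after mult by a power of p
  have key : ∀ i : A, Φ' i = 0 → ∃ m : ℕ, y ∣ (p : A) ^ m * i := by
    intro i hi
    obtain ⟨m, hm⟩ := hx₀loc i
    refine ⟨m, ?_⟩
    have hmem : (p : A) ^ m * i ∈ Algebra.adjoin R {y} := hadj hm
    rw [Algebra.adjoin_singleton_eq_range_aeval] at hmem
    obtain ⟨f, hf⟩ := hmem
    simp only [AlgHom.toRingHom_eq_coe, RingHom.coe_coe] at hf
    have hc0 : f.coeff 0 = 0 := by
      have h1 : Φ' (aeval y f) = aeval (Φ' y) f := (aeval_algHom_apply Φ' y f).symm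
      rw [hΦy] at h1
      have h2 : aeval (0 : R) f = f.coeff 0 := by simp [aeval_def, eval₂_at_zero]
      have h3 : Φ' ((p : A) ^ m * i) = 0 := by
        rw [show ((p:A)) = algebraMap R A p from rfl, ← map_pow, map_mul, AlgHom.commutes, hi]
        ring
      rw [hf, h3, h2] at h1
      exact h1.symm
    refine ⟨aeval y f.divX, ?_⟩
    rw [← hf]
    conv_lhs => rw [← X_mul_divX_add f]
    rw [hc0, C_0, add_zero, map_mul, aeval_X]
  -- uniform power
  obtain ⟨s, hs⟩ := hfg
  have hker : ∀ i : A, i ∈ RingHom.ker Φ ↔ Φ' i = 0 := fun i => Iff.rfl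
  have hsmem : ∀ a ∈ s, ∃ m : ℕ, y ∣ (p : A) ^ m * a := by
    intro a ha
    refine key a ?_
    have : a ∈ RingHom.ker Φ := by rw [← hs]; exact Ideal.subset_span ha
    exact this
  choose mfun hmfun using hsmem
  set n : ℕ := s.attach.sup (fun a => mfun a.1 a.2) with hn
  have hunif : ∀ i : A, Φ' i = 0 → y ∣ (p : A) ^ n * i := by
    intro i hi
    set J : Ideal A := Submodule.comap (LinearMap.mulLeft A ((p : A) ^ n)) (Ideal.span {y})
      with hJ
    have hsJ : RingHom.ker Φ ≤ J := by
      rw [← hs, Ideal.span_le]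
      intro a ha
      have hma : mfun a ha ≤ n := Finset.le_sup (f := fun b : {x // x ∈ s} => mfun b.1 b.2)
        (s.mem_attach ⟨a, ha⟩)
      obtain ⟨b, hb⟩ := hmfun a ha
      have : y ∣ (p : A) ^ n * a := by
        refine ⟨(p : A) ^ (n - mfun a ha) * b, ?_⟩
        calc (p : A) ^ n * a = (p : A) ^ (n - mfun a ha) * ((p : A) ^ (mfun a ha) * a) := by
              rw [← mul_assoc, ← pow_add]
              congr 2
              omega
          _ = (p : A) ^ (n - mfun a ha) * (y * b) := by rw [hb]
          _ = y * ((p : A) ^ (n - mfun a ha) * b) := by ring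
      simpa [hJ, Submodule.mem_comap, LinearMap.mulLeft_apply, Ideal.mem_span_singleton]
        using this
    have hiJ : i ∈ J := hsJ hi
    simpa [hJ, Submodule.mem_comap, LinearMap.mulLeft_apply, Ideal.mem_span_singleton]
      using hiJ
  -- descend
  obtain ⟨x, k, hx1, hx2, hx3, hx4⟩ := descend' Φ' p hpA n y hΦy hy0 hunif
  -- p does not divide x
  have hnp : ¬ ((p : A) ∣ x) := by
    rintro ⟨x', hx'⟩
    have hΦx' : Φ' x' = 0 := by
      have h0 : (p : R) * Φ' x' = 0 := by
        have h1 : Φ' x = Φ' ((p : A) * x') := by rw [hx']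
        rw [hx1] at h1
        rw [show ((p:A)) = algebraMap R A p from rfl, map_mul, AlgHom.commutes] at h1
        simpa using h1.symm
      have hp0 : (p : R) ≠ 0 := fun h => hpA.ne_zero (by rw [h]; simp)
      exact (mul_eq_zero.mp h0).resolve_left hp0
    obtain ⟨b, hb⟩ := hx3 x' hΦx'
    have hx'0 : x' ≠ 0 := by rintro rfl; exact hx2 (by rw [hx']; ring)
    have : x' * (1 - (p : A) * b) = 0 := by
      calc x' * (1 - (p : A) * b) = x' - (p : A) * x' * b := by ring
        _ = x' - x * b := by rw [hx']
        _ = 0 := by rw [← hb]; ring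
    rcases mul_eq_zero.mp this with h | h
    · exact hx'0 h
    · exact hpA.not_isUnit (IsUnit.of_mul_eq_one b (by linear_combination -h))
  -- transcendental
  have hxt : Transcendental R x := by
    rintro ⟨q, hq0, hq⟩
    have h1 : aeval (algebraMap R A (p ^ k) * x) (q.scaleRoots (p ^ k)) = 0 :=
      scaleRoots_aeval_eq_zero hq
    have h2 : algebraMap R A (p ^ k) * x = y := by
      rw [hx4, map_pow]; rfl
    rw [h2] at h1
    have hq1 : q.scaleRoots (p ^ k) ≠ 0 := by
      intro h
      apply hq0
      have := q.coeff_scaleRoots_natDegree (p ^ k)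
      rw [h, coeff_zero] at this
      exact leadingCoeff_eq_zero.mp this.symm
    have hyalg : IsAlgebraic R y := ⟨q.scaleRoots (p ^ k), hq1, h1⟩
    refine hx₀t (IsAlgebraic.of_aeval (X - C c) ?_ ?_ ?_)
    · rw [natDegree_X_sub_C]; omega
    · rw [leadingCoeff_X_sub_C]; exact one_mem _
    · rwa [map_sub, aeval_X, aeval_C, show algebraMap R A c = (c : A) from rfl, ← hy]
  -- adjoin = ⊤
  have hadjx : Algebra.adjoin R {x₀} ≤ Algebra.adjoin R {x} := by
    apply Algebra.adjoin_le
    intro z hz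
    rw [Set.mem_singleton_iff] at hz
    rw [hz]
    have hxx : x₀ = algebraMap R A (p ^ k) * x + algebraMap R A c := by
      rw [show algebraMap R A (p^k) * x = (p:A)^k * x from by rw [map_pow]; rfl, ← hx4, hy,
        show algebraMap R A c = (c : A) from rfl]
      ring
    rw [hxx]
    exact add_mem (mul_mem (Subalgebra.algebraMap_mem _ _)
      (Algebra.self_mem_adjoin_singleton R x)) (Subalgebra.algebraMap_mem _ c)
  have hdiv : ∀ (m : ℕ) (a : A), (p : A) ^ m * a ∈ Algebra.adjoin R {x} →
      a ∈ Algebra.adjoin R {x} := by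
    intro m
    induction m with
    | zero => intro a ha; simpa using ha
    | succ m ih =>
      intro a ha
      have h1 : (p : A) ^ m * ((p : A) * a) ∈ Algebra.adjoin R {x} := by
        rw [show (p : A) ^ m * ((p : A) * a) = (p : A) ^ (m + 1) * a from by ring]
        exact ha
      exact adjoin_of_p_mul' Φ' p hpA x hx1 hnp a (ih _ h1)
  have htop : Algebra.adjoin R {x} = ⊤ := by
    rw [eq_top_iff]
    intro a _
    obtain ⟨m, hm⟩ := hx₀loc a
    exact hdiv m a (hadjx hm)
  exact ⟨x, hx1, hxt, htop⟩
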